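/- Zowe–Kurcyusz Lagrange multiplier theorem: Let X, Y be Banach spaces, M ⊆ X nonempty closed convex, J : X → ℝ Fréchet differentiable at x̂ and F : X → Y continuously Fréchet differentiable at x̂, where x̂ ∈ M with F(x̂) = 0 is a local minimizer of J over {x ∈ M : F(x) = 0}. If x̂ is a regular point, i.e. F'(x̂)[C(x̂)] = Y where C(x̂) = {θ(x − x̂) : x ∈ M, θ ≥ 0}, then there exists λ ∈ Y' such that J'(x̂)[s] − ⟨λ, F'(x̂)[s]⟩ ≥ 0 for all s ∈ C(x̂). -/

import Mathlib

open Set Filter Metric Topology Pointwise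

lemma zk_combo {X : Type*} [NormedAddCommGroup X] [NormedSpace ℝ X]
    (xhat : X) {θ₁ θ₂ : ℝ} (h1 : 0 ≤ θ₁) (h2 : 0 ≤ θ₂) (m₁ m₂ : X) :
    ∃ m ∈ segment ℝ m₁ m₂,
      θ₁ • (m₁ - xhat) + θ₂ • (m₂ - xhat) = (θ₁ + θ₂) • (m - xhat) := by
  rcases eq_or_lt_of_le (add_nonneg h1 h2) with h0 | h0
  · refine ⟨m₁, left_mem_segment ℝ m₁ m₂, ?_⟩
    have hθ1 : θ₁ = 0 := by linarith [h1, h2]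
    have hθ2 : θ₂ = 0 := by linarith [h1, h2]
    simp [hθ1, hθ2, ← h0]
  · have hTne : θ₁ + θ₂ ≠ 0 := ne_of_gt h0
    refine ⟨(θ₁ / (θ₁ + θ₂)) • m₁ + (θ₂ / (θ₁ + θ₂)) • m₂, ?_, ?_⟩
    · exact ⟨θ₁ / (θ₁ + θ₂), θ₂ / (θ₁ + θ₂), div_nonneg h1 h0.le, div_nonneg h2 h0.le,
        by field_simp, rfl⟩
    · match_scalars <;> (field_simp; try ring)

set_option maxHeartbeats 1000000 in
lemma zk_open_mapping {X Y : Type*}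
    [NormedAddCommGroup X] [NormedSpace ℝ X] [CompleteSpace X]
    [NormedAddCommGroup Y] [NormedSpace ℝ Y] [CompleteSpace Y]
    (M : Set X) (hMcl : IsClosed M) (hMconv : Convex ℝ M)
    (xhat : X) (hxM : xhat ∈ M) (A : X →L[ℝ] Y)
    (hsurj : ∀ y : Y, ∃ θ : ℝ, 0 ≤ θ ∧ ∃ x ∈ M, A (θ • (x - xhat)) = y) :
    ∃ c : ℝ, 0 < c ∧ ∀ y : Y, ∃ θ : ℝ, 0 ≤ θ ∧ θ ≤ c * ‖y‖ ∧ ∃ m ∈ M,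
      ‖θ • (m - xhat)‖ ≤ c * ‖y‖ ∧ A (θ • (m - xhat)) = y := by
  classical
  haveI : Nonempty Y := ⟨0⟩
  -- truncated cones
  set K : ℕ → Set X := fun n =>
    {s | ∃ θ x, 0 ≤ θ ∧ θ ≤ (n : ℝ) ∧ x ∈ M ∧ ‖x - xhat‖ ≤ (n : ℝ) ∧ s = θ • (x - xhat)}
    with hK
  have hKmono : ∀ {n m : ℕ}, n ≤ m → K n ⊆ K m := by
    intro n m hnm s hs
    obtain ⟨θ, x, h0, h1, h2, h3, h4⟩ := hs
    exact ⟨θ, x, h0, h1.trans (by exact_mod_cast hnm), h2,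
      h3.trans (by exact_mod_cast hnm), h4⟩
  have hKconv : ∀ n, Convex ℝ (K n) := by
    intro n s₁ hs₁ s₂ hs₂ a b ha hb hab
    obtain ⟨θ₁, x₁, h10, h11, h12, h13, rfl⟩ := hs₁
    obtain ⟨θ₂, x₂, h20, h21, h22, h23, rfl⟩ := hs₂
    have e1 : a • θ₁ • (x₁ - xhat) = (a * θ₁) • (x₁ - xhat) := (mul_smul _ _ _).symm
    have e2 : b • θ₂ • (x₂ - xhat) = (b * θ₂) • (x₂ - xhat) := (mul_smul _ _ _).symm
    obtain ⟨m, hmseg, hmeq⟩ := zk_combo xhat (mul_nonneg ha h10) (mul_nonneg hb h20) x₁ x₂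
    obtain ⟨u, v, hu, hv, huv, rfl⟩ := hmseg
    refine ⟨a * θ₁ + b * θ₂, u • x₁ + v • x₂, by positivity, ?_, ?_, ?_, by
      rw [e1, e2, hmeq]⟩
    · calc a * θ₁ + b * θ₂ ≤ a * n + b * n := by
            apply add_le_add (mul_le_mul_of_nonneg_left h11 ha)
              (mul_le_mul_of_nonneg_left h21 hb)
          _ = n := by rw [← add_mul, hab, one_mul]
    · exact hMconv h12 h22 hu hv huv
    · have : u • x₁ + v • x₂ - xhat = u • (x₁ - xhat) + v • (x₂ - xhat) := by
        match_scalars <;> linarith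
      rw [this]
      calc ‖u • (x₁ - xhat) + v • (x₂ - xhat)‖
          ≤ ‖u • (x₁ - xhat)‖ + ‖v • (x₂ - xhat)‖ := norm_add_le _ _
        _ = u * ‖x₁ - xhat‖ + v * ‖x₂ - xhat‖ := by
            rw [norm_smul, norm_smul, Real.norm_eq_abs, Real.norm_eq_abs,
              abs_of_nonneg hu, abs_of_nonneg hv]
        _ ≤ u * n + v * n := by
            exact add_le_add (mul_le_mul_of_nonneg_left h13 hu)
              (mul_le_mul_of_nonneg_left h23 hv)
        _ = n := by rw [← add_mul, huv, one_mul]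
  have hcover : ∀ y : Y, ∃ n : ℕ, y ∈ A '' K n := by
    intro y
    obtain ⟨θ, hθ, x, hx, hAx⟩ := hsurj y
    refine ⟨⌈max θ ‖x - xhat‖⌉₊, θ • (x - xhat), ⟨θ, x, hθ, ?_, hx, ?_, rfl⟩, hAx⟩
    · exact (le_max_left _ _).trans (Nat.le_ceil _)
    · exact (le_max_right _ _).trans (Nat.le_ceil _)
  -- Baire category
  obtain ⟨n₀, hn₀⟩ : ∃ n, (interior (closure (A '' K n))).Nonempty := by
    apply nonempty_interior_of_iUnion_of_closed (fun n => isClosed_closure)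
    apply eq_univ_of_forall
    intro y
    obtain ⟨n, hn⟩ := hcover y
    exact mem_iUnion.2 ⟨n, subset_closure hn⟩
  obtain ⟨y₀, hy₀⟩ := hn₀
  obtain ⟨n₁, hn₁⟩ := hcover (-y₀)
  set N : ℕ := max n₀ n₁ with hN
  set D : Set Y := closure (A '' K N) with hD
  have hDconv : Convex ℝ D := ((hKconv N).linear_image A.toLinearMap).closure
  have hy₀D : y₀ ∈ interior D :=
    interior_mono (closure_mono (image_mono (hKmono (le_max_left _ _)))) hy₀
  have hy₀D' : -y₀ ∈ D :=
    subset_closure (image_mono (hKmono (le_max_right _ _)) hn₁)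
  have h0D : (0 : Y) ∈ interior D := by
    rcases eq_or_ne y₀ 0 with h | h
    · rwa [h] at hy₀D
    · apply hDconv.openSegment_interior_closure_subset_interior hy₀D
        (subset_closure hy₀D')
      exact ⟨1/2, 1/2, by norm_num, by norm_num, by norm_num, by module⟩
  obtain ⟨δ, hδpos, hδball⟩ : ∃ δ : ℝ, 0 < δ ∧ closedBall (0 : Y) δ ⊆ D := by
    obtain ⟨ε, hε, hball⟩ := Metric.mem_nhds_iff.1 (mem_interior_iff_mem_nhds.1 h0D)
    exact ⟨ε / 2, by linarith, (closedBall_subset_ball (by linarith)).trans hball⟩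
  -- the single approximation step
  have hstep : ∀ z : Y, ∃ θ x, 0 ≤ θ ∧ θ ≤ (N : ℝ) ∧ x ∈ M ∧ ‖x - xhat‖ ≤ (N : ℝ) ∧
      (‖z‖ ≤ δ → ‖z - A (θ • (x - xhat))‖ ≤ δ / 2) := by
    intro z
    by_cases hz : ‖z‖ ≤ δ
    · have hzD : z ∈ D := hδball (by simpa [Metric.mem_closedBall, dist_eq_norm] using hz)
      obtain ⟨b, hb, hdist⟩ := Metric.mem_closure_iff.1 hzD (δ / 2) (by linarith)
      obtain ⟨s, hs, rfl⟩ := hb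
      obtain ⟨θ, x, h0, h1, h2, h3, rfl⟩ := hs
      exact ⟨θ, x, h0, h1, h2, h3, fun _ => by
        rw [← dist_eq_norm]; exact hdist.le⟩
    · exact ⟨0, xhat, le_refl 0, Nat.cast_nonneg N, hxM, by simp, fun h => absurd h hz⟩
  choose Θf Ξf hf0 hfN hfM hfNx hfapprox using hstep
  -- main inner lemma: solve A s = y with s in the cone, quantitatively, for small y
  have main : ∀ y : Y, ‖y‖ ≤ δ → ∃ θ : ℝ, ∃ m ∈ M, 0 ≤ θ ∧ θ ≤ 2 * (N : ℝ) ∧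
      ‖θ • (m - xhat)‖ ≤ 2 * (N : ℝ)^2 ∧ A (θ • (m - xhat)) = y := by
    intro y hy
    -- the residual sequence
    set z : ℕ → Y := fun n => Nat.rec y
      (fun _ zn => (2 : ℝ) • (zn - A (Θf zn • (Ξf zn - xhat)))) n with hz
    have hzsucc : ∀ n, z (n+1) = (2 : ℝ) • (z n - A (Θf (z n) • (Ξf (z n) - xhat))) :=
      fun n => rfl
    have hzbound : ∀ n, ‖z n‖ ≤ δ := by
      intro n
      induction n with
      | zero => exact hy
      | succ n ih =>
        rw [hzsucc n, norm_smul]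
        have := hfapprox (z n) ih
        rw [Real.norm_eq_abs]
        calc |(2:ℝ)| * ‖z n - A (Θf (z n) • (Ξf (z n) - xhat))‖
            ≤ 2 * (δ / 2) := by
              rw [abs_of_nonneg (by norm_num : (0:ℝ) ≤ 2)]
              exact mul_le_mul_of_nonneg_left this (by norm_num)
          _ = δ := by ring
    set θs : ℕ → ℝ := fun j => (2 : ℝ)⁻¹ ^ j * Θf (z j) with hθs
    set u : ℕ → X := fun j => θs j • (Ξf (z j) - xhat) with hu
    have hθsnn : ∀ j, 0 ≤ θs j := fun j => mul_nonneg (by positivity) (hf0 _)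
    have hθsle : ∀ j, θs j ≤ (N : ℝ) * (2⁻¹ : ℝ) ^ j := by
      intro j
      rw [hθs]
      calc (2 : ℝ)⁻¹ ^ j * Θf (z j) ≤ (2:ℝ)⁻¹ ^ j * (N : ℝ) :=
            mul_le_mul_of_nonneg_left (hfN _) (by positivity)
        _ = (N : ℝ) * (2⁻¹:ℝ) ^ j := mul_comm _ _
    have hule : ∀ j, ‖u j‖ ≤ ((N : ℝ) * (N : ℝ)) * (2⁻¹ : ℝ) ^ j := by
      intro j
      rw [hu]
      rw [norm_smul, Real.norm_eq_abs, abs_of_nonneg (hθsnn j)]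
      calc θs j * ‖Ξf (z j) - xhat‖ ≤ ((N:ℝ) * (2⁻¹:ℝ)^j) * (N : ℝ) :=
            mul_le_mul (hθsle j) (hfNx _) (norm_nonneg _) (by positivity)
        _ = ((N : ℝ) * (N : ℝ)) * (2⁻¹:ℝ) ^ j := by ring
    have hgeom : Summable (fun j : ℕ => (2⁻¹ : ℝ) ^ j) :=
      summable_geometric_of_lt_one (by norm_num) (by norm_num)
    have husum : Summable u :=
      Summable.of_norm_bounded (hgeom.mul_left ((N:ℝ) * (N:ℝ))) hule
    have hθsum : Summable θs := by
      apply Summable.of_norm_bounded (hgeom.mul_left (N:ℝ))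
      intro j
      rw [Real.norm_eq_abs, abs_of_nonneg (hθsnn j)]
      exact hθsle j
    set s : X := ∑' j, u j with hs
    set Θtot : ℝ := ∑' j, θs j with hΘtot
    have hΘnn : 0 ≤ Θtot := tsum_nonneg hθsnn
    have htsumgeo : ∑' j : ℕ, (2⁻¹:ℝ)^j = 2 := by
      rw [tsum_geometric_of_lt_one (by norm_num) (by norm_num)]
      norm_num
    have hΘle : Θtot ≤ 2 * (N : ℝ) := by
      calc Θtot ≤ ∑' j, (N : ℝ) * (2⁻¹:ℝ)^j :=
            Summable.tsum_le_tsum hθsle hθsum (hgeom.mul_left _)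
        _ = (N : ℝ) * 2 := by rw [tsum_mul_left, htsumgeo]
        _ = 2 * (N : ℝ) := mul_comm _ _
    have hunorm : Summable fun j => ‖u j‖ :=
      Summable.of_nonneg_of_le (fun j => norm_nonneg _) hule (hgeom.mul_left _)
    have hsnorm : ‖s‖ ≤ 2 * (N : ℝ)^2 := by
      calc ‖s‖ ≤ ∑' j, ‖u j‖ := norm_tsum_le_tsum_norm hunorm
        _ ≤ ∑' j, ((N:ℝ) * (N:ℝ)) * (2⁻¹:ℝ)^j :=
            Summable.tsum_le_tsum hule hunorm (hgeom.mul_left _)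
        _ = ((N:ℝ) * (N:ℝ)) * 2 := by rw [tsum_mul_left, htsumgeo]
        _ = 2 * (N:ℝ)^2 := by ring
    have huj : ∀ j, u j = ((2:ℝ)⁻¹ ^ j) • (Θf (z j) • (Ξf (z j) - xhat)) :=
      fun j => mul_smul _ _ _
    -- key telescoping identity
    have hkey : ∀ n, y - A (∑ j ∈ Finset.range n, u j) = ((2:ℝ)⁻¹ ^ n) • z n := by
      intro n
      induction n with
      | zero => simp; rfl
      | succ n ih =>
        rw [Finset.sum_range_succ, map_add]
        calc y - (A (∑ j ∈ Finset.range n, u j) + A (u n))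
            = (y - A (∑ j ∈ Finset.range n, u j)) - A (u n) := by abel
          _ = ((2:ℝ)⁻¹ ^ n) • z n - ((2:ℝ)⁻¹ ^ n) • A (Θf (z n) • (Ξf (z n) - xhat)) := by
              rw [ih, huj n, map_smul]
          _ = ((2:ℝ)⁻¹ ^ n) • (z n - A (Θf (z n) • (Ξf (z n) - xhat))) := (smul_sub _ _ _).symm
          _ = ((2:ℝ)⁻¹ ^ (n+1)) • z (n+1) := by
              rw [hzsucc n]
              match_scalars <;> (rw [pow_succ]; ring)
    -- A s = y
    have hAs : A s = y := by
      have h2 : Tendsto (fun n : ℕ => ((2:ℝ)⁻¹ ^ n) • z n) atTop (nhds 0) := by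
        have hg : Tendsto (fun n : ℕ => δ * (2⁻¹:ℝ)^n) atTop (nhds 0) := by
          simpa using (tendsto_pow_atTop_nhds_zero_of_lt_one
            (by norm_num : (0:ℝ) ≤ 2⁻¹) (by norm_num : (2⁻¹:ℝ) < 1)).const_mul δ
        apply squeeze_zero_norm ?_ hg
        intro n
        rw [norm_smul, Real.norm_eq_abs, abs_of_nonneg (by positivity : (0:ℝ) ≤ (2:ℝ)⁻¹ ^ n)]
        calc (2⁻¹:ℝ)^n * ‖z n‖ ≤ (2⁻¹:ℝ)^n * δ :=
            mul_le_mul_of_nonneg_left (hzbound n) (by positivity)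
          _ = δ * (2⁻¹:ℝ)^n := mul_comm _ _
      have h1 : Tendsto (fun n => y - A (∑ j ∈ Finset.range n, u j)) atTop (nhds (y - A s)) :=
        tendsto_const_nhds.sub ((A.continuous.tendsto s).comp husum.hasSum.tendsto_sum_nat)
      have h0 : Tendsto (fun n => y - A (∑ j ∈ Finset.range n, u j)) atTop (nhds 0) := by
        simpa only [hkey] using h2
      exact (sub_eq_zero.1 (tendsto_nhds_unique h1 h0)).symm
    -- partial sums representation in the cone
    have hpartial : ∀ n, ∃ m ∈ M,
        ∑ j ∈ Finset.range n, u j = (∑ j ∈ Finset.range n, θs j) • (m - xhat) := by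
      intro n
      induction n with
      | zero => exact ⟨xhat, hxM, by simp⟩
      | succ n ih =>
        obtain ⟨m, hm, hrep⟩ := ih
        obtain ⟨m', hm'seg, hm'eq⟩ := zk_combo xhat
          (Finset.sum_nonneg (fun j _ => hθsnn j)) (hθsnn n) m (Ξf (z n))
        refine ⟨m', hMconv.segment_subset hm (hfM _) hm'seg, ?_⟩
        rw [Finset.sum_range_succ, Finset.sum_range_succ, hrep]
        rw [← hm'eq, hu]
    -- limit representation
    rcases eq_or_lt_of_le hΘnn with hΘ0 | hΘpos
    · -- Θtot = 0 : all θs vanish, so s = 0 and y = 0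
      have hall : ∀ j, θs j = 0 := by
        intro j
        have := Summable.le_tsum hθsum j (fun k _ => hθsnn k)
        have h2 := hθsnn j
        rw [← hΘtot, ← hΘ0] at this
        linarith
      have hu0 : ∀ j, u j = 0 := fun j => by
        have hj : u j = θs j • (Ξf (z j) - xhat) := rfl
        rw [hj, hall j, zero_smul]
      have hs0 : s = 0 := by
        rw [hs]
        simp [hu0]
      have hy0 : y = 0 := by rw [← hAs, hs0, map_zero]
      exact ⟨0, xhat, hxM, le_refl 0, by positivity,
        by rw [zero_smul, norm_zero]; positivity,
        by rw [hy0, zero_smul, map_zero]⟩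
    · -- Θtot > 0
      set m : X := xhat + Θtot⁻¹ • s with hm
      have hmM : m ∈ M := by
        have hq : ∀ n, xhat + Θtot⁻¹ • (∑ j ∈ Finset.range n, u j) ∈ M := by
          intro n
          obtain ⟨mn, hmn, hrep⟩ := hpartial n
          have hTn : 0 ≤ ∑ j ∈ Finset.range n, θs j :=
            Finset.sum_nonneg (fun j _ => hθsnn j)
          have hTle : (∑ j ∈ Finset.range n, θs j) ≤ Θtot :=
            Summable.sum_le_tsum _ (fun k _ => hθsnn k) hθsum
          have hcoef : 0 ≤ (∑ j ∈ Finset.range n, θs j) / Θtot := by positivity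
          have hcoef' : (∑ j ∈ Finset.range n, θs j) / Θtot ≤ 1 :=
            (div_le_one hΘpos).2 hTle
          have : xhat + Θtot⁻¹ • (∑ j ∈ Finset.range n, u j)
              = (1 - (∑ j ∈ Finset.range n, θs j) / Θtot) • xhat
                + ((∑ j ∈ Finset.range n, θs j) / Θtot) • mn := by
            rw [hrep, smul_smul]
            match_scalars <;> (field_simp; try ring)
          rw [this]
          exact hMconv hxM hmn (by linarith) hcoef (by ring)
        have hqt : Tendsto (fun n => xhat + Θtot⁻¹ • (∑ j ∈ Finset.range n, u j))
            atTop (nhds m) := by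
          rw [hm]
          exact tendsto_const_nhds.add
            (((continuous_const_smul (Θtot⁻¹)).tendsto s).comp
              husum.hasSum.tendsto_sum_nat)
        exact hMcl.mem_of_tendsto hqt (Eventually.of_forall hq)
      refine ⟨Θtot, m, hmM, hΘnn, hΘle, ?_, ?_⟩
      · have : Θtot • (m - xhat) = s := by
          rw [hm]
          simp only [add_sub_cancel_left]
          rw [smul_smul, mul_inv_cancel₀ (ne_of_gt hΘpos), one_smul]
        rw [this]; exact hsnorm
      · have : Θtot • (m - xhat) = s := by
          rw [hm]
          simp only [add_sub_cancel_left]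
          rw [smul_smul, mul_inv_cancel₀ (ne_of_gt hΘpos), one_smul]
        rw [this]; exact hAs
  -- now rescale to arbitrary y
  refine ⟨(2 * (N:ℝ) + 2 * (N:ℝ)^2 + 1) / δ, by positivity, ?_⟩
  intro y
  rcases eq_or_ne y 0 with rfl | hy0
  · exact ⟨0, le_refl 0, by simp, xhat, hxM, by simp, by simp⟩
  · have hny : 0 < ‖y‖ := norm_pos_iff.2 hy0
    obtain ⟨θ', m, hmM, hθ'0, hθ'le, hnle, hAeq⟩ := main ((δ / ‖y‖) • y) (by
      rw [norm_smul, Real.norm_eq_abs, abs_of_nonneg (by positivity)]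
      rw [div_mul_cancel₀ _ (ne_of_gt hny)])
    refine ⟨(‖y‖ / δ) * θ', by positivity, ?_, m, hmM, ?_, ?_⟩
    · calc (‖y‖ / δ) * θ' ≤ (‖y‖ / δ) * (2 * (N:ℝ)) :=
          mul_le_mul_of_nonneg_left hθ'le (by positivity)
        _ = (2 * (N:ℝ)) / δ * ‖y‖ := by ring
        _ ≤ ((2 * (N:ℝ) + 2 * (N:ℝ)^2 + 1) / δ) * ‖y‖ := by
          gcongr
          nlinarith [sq_nonneg ((N:ℝ))]
    · have heq : ((‖y‖ / δ) * θ') • (m - xhat) = (‖y‖ / δ) • (θ' • (m - xhat)) :=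
        mul_smul _ _ _
      rw [heq, norm_smul, Real.norm_eq_abs, abs_of_nonneg (by positivity)]
      calc (‖y‖ / δ) * ‖θ' • (m - xhat)‖ ≤ (‖y‖ / δ) * (2 * (N:ℝ)^2) :=
          mul_le_mul_of_nonneg_left hnle (by positivity)
        _ = (2 * (N:ℝ)^2) / δ * ‖y‖ := by ring
        _ ≤ ((2 * (N:ℝ) + 2 * (N:ℝ)^2 + 1) / δ) * ‖y‖ := by
          gcongr
          nlinarith [Nat.cast_nonneg (α := ℝ) N]
    · have heq : ((‖y‖ / δ) * θ') • (m - xhat) = (‖y‖ / δ) • (θ' • (m - xhat)) :=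
        mul_smul _ _ _
      rw [heq, map_smul, hAeq, smul_smul]
      rw [div_mul_div_comm, mul_comm ‖y‖ δ, div_self (by positivity), one_smul]

set_option maxHeartbeats 1000000 in
lemma zk_newton {X Y : Type*}
    [NormedAddCommGroup X] [NormedSpace ℝ X] [CompleteSpace X]
    [NormedAddCommGroup Y] [NormedSpace ℝ Y]
    (M : Set X) (hMcl : IsClosed M) (hMconv : Convex ℝ M)
    (xhat : X) (hxM : xhat ∈ M)
    (F : X → Y) (F' : X → (X →L[ℝ] Y)) (hF : ∀ x, HasFDerivAt F (F' x) x)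
    (A : X →L[ℝ] Y)
    (c : ℝ) (hc : 0 < c)
    (hQ : ∀ y : Y, ∃ θ : ℝ, 0 ≤ θ ∧ θ ≤ c * ‖y‖ ∧ ∃ m ∈ M,
      ‖θ • (m - xhat)‖ ≤ c * ‖y‖ ∧ A (θ • (m - xhat)) = y)
    (r : ℝ) (hr : 0 < r)
    (hFr : ∀ z ∈ closedBall xhat r, ‖F' z - A‖ ≤ 1 / (2*c))
    (x₀ : X) (T₀ : ℝ) (m₀ : X) (hT₀0 : 0 ≤ T₀) (hm₀ : m₀ ∈ M)
    (hx₀ : x₀ = xhat + T₀ • (m₀ - xhat))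
    (hx₀ball : ‖x₀ - xhat‖ ≤ r / 2)
    (hsmall : 2 * c * ‖F x₀‖ ≤ min (r / 2) (1 - T₀)) :
    ∃ xi ∈ M, F xi = 0 ∧ ‖xi - x₀‖ ≤ 2 * c * ‖F x₀‖ := by
  classical
  choose Θf hΘ0 hΘle mf hmM hknorm hkA using hQ
  set k : X → X := fun v => Θf (-F v) • (mf (-F v) - xhat) with hk
  set seq : ℕ → X := fun n => (fun v => v + k v)^[n] x₀ with hseq
  have hseq0 : seq 0 = x₀ := rfl
  have hseqsucc : ∀ n, seq (n+1) = seq n + k (seq n) :=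
    fun n => Function.iterate_succ_apply' _ _ _
  have hFx₀nn : (0:ℝ) ≤ ‖F x₀‖ := norm_nonneg _
  have hsm1 : 2 * c * ‖F x₀‖ ≤ r / 2 := hsmall.trans (min_le_left _ _)
  have hsm2 : 2 * c * ‖F x₀‖ ≤ 1 - T₀ := hsmall.trans (min_le_right _ _)
  -- main invariant
  have hinv : ∀ n, ‖F (seq n)‖ ≤ (1/2)^n * ‖F x₀‖ ∧
      ‖seq n - x₀‖ ≤ 2*c*(1 - (1/2)^n) * ‖F x₀‖ ∧
      ∃ T m, 0 ≤ T ∧ m ∈ M ∧ T ≤ T₀ + 2*c*(1 - (1/2)^n)*‖F x₀‖ ∧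
        seq n = xhat + T • (m - xhat) := by
    intro n
    induction n with
    | zero =>
      refine ⟨by rw [hseq0]; simp, by rw [hseq0]; simp, T₀, m₀, hT₀0, hm₀, by simp, by
        rw [hseq0, hx₀]⟩
    | succ n ih =>
      obtain ⟨hFn, hdist, T, m, hT0, hmMem, hTle, hrep⟩ := ih
      have hpow0 : (0:ℝ) ≤ (1/2:ℝ)^n := by positivity
      have hpow1 : (1/2:ℝ)^n ≤ 1 := pow_le_one₀ (by norm_num) (by norm_num)
      -- bound on the correction
      have hknn : ‖k (seq n)‖ ≤ c * ‖F (seq n)‖ := by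
        have := hknorm (-F (seq n))
        rwa [norm_neg] at this
      have hθn : Θf (-F (seq n)) ≤ c * ‖F (seq n)‖ := by
        have := hΘle (-F (seq n))
        rwa [norm_neg] at this
      have hkFn : ‖k (seq n)‖ ≤ c * ((1/2)^n * ‖F x₀‖) :=
        hknn.trans (mul_le_mul_of_nonneg_left hFn hc.le)
      -- new distance bound
      have hdist' : ‖seq (n+1) - x₀‖ ≤ 2*c*(1 - (1/2)^(n+1)) * ‖F x₀‖ := by
        rw [hseqsucc]
        calc ‖seq n + k (seq n) - x₀‖ ≤ ‖seq n - x₀‖ + ‖k (seq n)‖ := by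
              rw [show seq n + k (seq n) - x₀ = (seq n - x₀) + k (seq n) by abel]
              exact norm_add_le _ _
          _ ≤ 2*c*(1 - (1/2)^n) * ‖F x₀‖ + c * ((1/2)^n * ‖F x₀‖) :=
              add_le_add hdist hkFn
          _ = 2*c*(1 - (1/2)^(n+1)) * ‖F x₀‖ := by ring
      -- membership in the ball of radius r
      have hball : ∀ w : X, ‖w - x₀‖ ≤ 2*c*‖F x₀‖ → w ∈ closedBall xhat r := by
        intro w hw
        rw [mem_closedBall, dist_eq_norm]
        calc ‖w - xhat‖ ≤ ‖w - x₀‖ + ‖x₀ - xhat‖ := by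
              rw [show w - xhat = (w - x₀) + (x₀ - xhat) by abel]
              exact norm_add_le _ _
          _ ≤ r/2 + r/2 := add_le_add (hw.trans hsm1) hx₀ball
          _ = r := by ring
      have hdist2 : ‖seq n - x₀‖ ≤ 2*c*‖F x₀‖ := by
        refine hdist.trans ?_
        have : 2*c*(1 - (1/2)^n) ≤ 2*c := by nlinarith
        exact mul_le_mul_of_nonneg_right this hFx₀nn
      have hdist2' : ‖seq (n+1) - x₀‖ ≤ 2*c*‖F x₀‖ := by
        refine hdist'.trans ?_
        have : 2*c*(1 - (1/2)^(n+1)) ≤ 2*c := by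
          have : (0:ℝ) ≤ (1/2:ℝ)^(n+1) := by positivity
          nlinarith
        exact mul_le_mul_of_nonneg_right this hFx₀nn
      have hb1 : seq n ∈ closedBall xhat r := hball _ hdist2
      have hb2 : seq (n+1) ∈ closedBall xhat r := hball _ hdist2'
      -- mean value estimate
      have hFn' : ‖F (seq (n+1))‖ ≤ (1/2)^(n+1) * ‖F x₀‖ := by
        have hG : ∀ w ∈ closedBall xhat r,
            HasFDerivWithinAt (fun v => F v - A v) (F' w - A) (closedBall xhat r) w :=
          fun w _ => ((hF w).sub (A.hasFDerivAt)).hasFDerivWithinAt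
        have hGb : ∀ w ∈ closedBall xhat r, ‖F' w - A‖ ≤ 1/(2*c) := hFr
        have hmvt := (convex_closedBall xhat r).norm_image_sub_le_of_norm_hasFDerivWithin_le
          hG hGb hb1 hb2
        have heq : (fun v => F v - A v) (seq (n+1)) - (fun v => F v - A v) (seq n)
            = F (seq (n+1)) := by
          simp only []
          rw [hseqsucc n, map_add]
          have : A (k (seq n)) = -F (seq n) := hkA (-F (seq n))
          rw [this]
          abel
        rw [heq] at hmvt
        calc ‖F (seq (n+1))‖ ≤ 1/(2*c) * ‖seq (n+1) - seq n‖ := hmvt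
          _ = 1/(2*c) * ‖k (seq n)‖ := by
              rw [hseqsucc n, show seq n + k (seq n) - seq n = k (seq n) by abel]
          _ ≤ 1/(2*c) * (c * ((1/2)^n * ‖F x₀‖)) := by
              exact mul_le_mul_of_nonneg_left hkFn (by positivity)
          _ = (1/2)^(n+1) * ‖F x₀‖ := by field_simp; ring
      -- new representation
      obtain ⟨m', hm'seg, hm'eq⟩ := zk_combo xhat hT0 (hΘ0 (-F (seq n))) m (mf (-F (seq n)))
      refine ⟨hFn', hdist', T + Θf (-F (seq n)), m',
        add_nonneg hT0 (hΘ0 _), hMconv.segment_subset hmMem (hmM _) hm'seg, ?_, ?_⟩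
      · calc T + Θf (-F (seq n))
            ≤ (T₀ + 2*c*(1 - (1/2)^n)*‖F x₀‖) + c * ((1/2)^n * ‖F x₀‖) :=
              add_le_add hTle (hθn.trans (mul_le_mul_of_nonneg_left hFn hc.le))
          _ = T₀ + 2*c*(1 - (1/2)^(n+1))*‖F x₀‖ := by ring
      · calc seq (n+1) = seq n + k (seq n) := hseqsucc n
          _ = xhat + T • (m - xhat) + Θf (-F (seq n)) • (mf (-F (seq n)) - xhat) := by
              rw [← hrep]
          _ = xhat + (T + Θf (-F (seq n))) • (m' - xhat) := by rw [add_assoc, hm'eq]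
  -- each iterate lies in M
  have hseqM : ∀ n, seq n ∈ M := by
    intro n
    obtain ⟨_, _, T, m, hT0, hmMem, hTle, hrep⟩ := hinv n
    have hT1 : T ≤ 1 := by
      have hpow0 : (0:ℝ) ≤ (1/2:ℝ)^n := by positivity
      have : 2*c*(1 - (1/2)^n)*‖F x₀‖ ≤ 2*c*‖F x₀‖ := by
        nlinarith [mul_nonneg (mul_nonneg hc.le hpow0) hFx₀nn]
      linarith
    have : xhat + T • (m - xhat) = (1 - T) • xhat + T • m := by
      match_scalars <;> ring
    rw [hrep, this]
    exact hMconv hxM hmMem (by linarith) hT0 (by ring)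
  -- the sequence is Cauchy
  have hcauchy : CauchySeq seq := by
    apply cauchySeq_of_le_geometric (1/2) (c * ‖F x₀‖) (by norm_num)
    intro n
    obtain ⟨hFn, _, _⟩ := hinv n
    rw [dist_eq_norm, hseqsucc n]
    have hknn : ‖k (seq n)‖ ≤ c * ‖F (seq n)‖ := by
      have := hknorm (-F (seq n))
      rwa [norm_neg] at this
    calc ‖seq n - (seq n + k (seq n))‖ = ‖k (seq n)‖ := by
          rw [show seq n - (seq n + k (seq n)) = -(k (seq n)) by abel, norm_neg]
      _ ≤ c * ‖F (seq n)‖ := hknn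
      _ ≤ c * ((1/2)^n * ‖F x₀‖) := mul_le_mul_of_nonneg_left hFn hc.le
      _ = c * ‖F x₀‖ * (1/2)^n := by ring
  obtain ⟨xi, hxi⟩ := cauchySeq_tendsto_of_complete hcauchy
  -- properties of the limit
  have hxiM : xi ∈ M := hMcl.mem_of_tendsto hxi (Eventually.of_forall hseqM)
  have hFxi : F xi = 0 := by
    have h1 : Tendsto (fun n => F (seq n)) atTop (nhds (F xi)) :=
      ((hF xi).continuousAt.tendsto).comp hxi
    have h2 : Tendsto (fun n => F (seq n)) atTop (nhds 0) := by
      apply squeeze_zero_norm (fun n => (hinv n).1)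
      have := (tendsto_pow_atTop_nhds_zero_of_lt_one
        (by norm_num : (0:ℝ) ≤ 1/2) (by norm_num : (1/2:ℝ) < 1)).mul_const ‖F x₀‖
      simpa using this
    exact tendsto_nhds_unique h1 h2
  refine ⟨xi, hxiM, hFxi, ?_⟩
  have h3 : Tendsto (fun n => ‖seq n - x₀‖) atTop (nhds ‖xi - x₀‖) :=
    ((continuous_norm.comp (continuous_id.sub continuous_const)).tendsto xi).comp hxi
  apply le_of_tendsto h3
  apply Eventually.of_forall
  intro n
  obtain ⟨_, hdist, _⟩ := hinv n
  refine hdist.trans ?_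
  have hpow0 : (0:ℝ) ≤ (1/2:ℝ)^n := by positivity
  have : 2*c*(1 - (1/2)^n) ≤ 2*c := by nlinarith
  exact mul_le_mul_of_nonneg_right this hFx₀nn

set_option maxHeartbeats 1000000 in
/-- Zowe–Kurcyusz Lagrange multiplier theorem: if `x̂ ∈ M`, `F(x̂) = 0`, is a local minimizer
of `J` over `{x ∈ M : F(x) = 0}`, `J` is Fréchet differentiable at `x̂`, `F` is continuously
Fréchet differentiable at `x̂`, and `x̂` is a regular point
(`F'(x̂)[C(x̂)] = Y`, where `C(x̂) = {θ(x - x̂) : x ∈ M, θ ≥ 0}` is the conical hull),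
then there exists `λ ∈ Y'` with `J'(x̂)[s] - ⟨λ, F'(x̂)[s]⟩ ≥ 0` for all `s ∈ C(x̂)`. -/
theorem zowe_kurcyusz_lagrange_multiplier
    {X Y : Type*}
    [NormedAddCommGroup X] [NormedSpace ℝ X] [CompleteSpace X]
    [NormedAddCommGroup Y] [NormedSpace ℝ Y] [CompleteSpace Y]
    (M : Set X) (hMne : M.Nonempty) (hMcl : IsClosed M) (hMconv : Convex ℝ M)
    (J : X → ℝ) (F : X → Y) (xhat : X)
    (hxM : xhat ∈ M) (hFx : F xhat = 0)
    -- `J` Fréchet differentiable at `x̂`: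
    (J' : X →L[ℝ] ℝ) (hJ : HasFDerivAt J J' xhat)
    -- `F` continuously Fréchet differentiable at `x̂`:
    (F' : X → (X →L[ℝ] Y)) (hF : ∀ x, HasFDerivAt F (F' x) x)
    (hF'cont : ContinuousAt F' xhat)
    -- local minimality of `x̂` over `{x ∈ M : F(x) = 0}`:
    (hmin : ∃ U ∈ nhds xhat, ∀ x ∈ U ∩ M, F x = 0 → J xhat ≤ J x)
    -- regular point condition `F'(x̂)[C(x̂)] = Y`:
    (hreg : ∀ y : Y, ∃ θ : ℝ, 0 ≤ θ ∧ ∃ x ∈ M, F' xhat (θ • (x - xhat)) = y) :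
    ∃ lam : Y →L[ℝ] ℝ, ∀ θ : ℝ, 0 ≤ θ → ∀ x ∈ M,
      0 ≤ J' (θ • (x - xhat)) - lam (F' xhat (θ • (x - xhat))) := by
  classical
  set A : X →L[ℝ] Y := F' xhat with hA
  obtain ⟨c, hc, hQ⟩ := zk_open_mapping M hMcl hMconv xhat hxM A hreg
  obtain ⟨U, hU, hUmin⟩ := hmin
  obtain ⟨rU, hrU, hUball⟩ := Metric.mem_nhds_iff.1 hU
  -- the cone
  set KK : Set X := {s | ∃ (θ : ℝ) (x : X), 0 ≤ θ ∧ x ∈ M ∧ s = θ • (x - xhat)} with hKK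
  have hKadd : ∀ s₁ ∈ KK, ∀ s₂ ∈ KK, s₁ + s₂ ∈ KK := by
    intro s₁ hs₁ s₂ hs₂
    obtain ⟨θ₁, x₁, h10, h11, rfl⟩ := hs₁
    obtain ⟨θ₂, x₂, h20, h21, rfl⟩ := hs₂
    obtain ⟨m, hmseg, hmeq⟩ := zk_combo xhat h10 h20 x₁ x₂
    exact ⟨θ₁ + θ₂, m, add_nonneg h10 h20,
      hMconv.segment_subset h11 h21 hmseg, hmeq⟩
  -- ===== KEY LEMMA : s in the cone, A s = 0  ⇒  0 ≤ J' s =====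
  have hkeylem : ∀ s ∈ KK, A s = 0 → 0 ≤ J' s := by
    rintro s ⟨θ, x, hθ0, hxMem, rfl⟩ hAs
    set s : X := θ • (x - xhat) with hs
    by_contra hneg
    push_neg at hneg
    set η : ℝ := -(J' s) with hη
    have hηpos : 0 < η := by simp only [hη]; linarith
    have hsne : s ≠ 0 := by
      intro h0
      rw [h0] at hneg
      simp at hneg
    have hsnorm : 0 < ‖s‖ := norm_pos_iff.2 hsne
    have hθpos : 0 < θ := by
      rcases eq_or_lt_of_le hθ0 with h | h
      · exfalso; apply hsne; rw [hs, ← h, zero_smul]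
      · exact h
    -- the little-o bound for J
    set εJ : ℝ := η / (4 * ‖s‖) with hεJ
    have hεJpos : 0 < εJ := by positivity
    obtain ⟨rJ, hrJ, hJball⟩ : ∃ rJ > 0, ∀ w : X, dist w xhat < rJ →
        ‖J w - J xhat - J' (w - xhat)‖ ≤ εJ * ‖w - xhat‖ := by
      have := hJ.isLittleO.def hεJpos
      rw [Metric.eventually_nhds_iff] at this
      obtain ⟨ε, hε, h⟩ := this
      exact ⟨ε, hε, fun w hw => by simpa using h hw⟩
    -- derivative closeness radius
    set εF : ℝ := min (1 / (2*c)) (η / (8*c*(‖J'‖+1)*‖s‖)) with hεF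
    have hεFpos : 0 < εF := by
      apply lt_min (by positivity)
      have : 0 < ‖J'‖ + 1 := by positivity
      positivity
    obtain ⟨rF, hrF, hFball⟩ : ∃ rF > 0, ∀ z ∈ closedBall xhat rF, ‖F' z - A‖ ≤ εF := by
      obtain ⟨d, hd, hcont⟩ := Metric.continuousAt_iff.1 hF'cont εF hεFpos
      refine ⟨d/2, by linarith, fun z hz => ?_⟩
      have : dist z xhat < d := by
        rw [mem_closedBall] at hz
        linarith
      have := hcont this
      rw [dist_eq_norm] at this
      exact le_of_lt this
    set β : ℝ := 2*c*εF with hβ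
    have hβpos : 0 < β := by positivity
    have hβ1 : β ≤ 1 := by
      have h1 : εF ≤ 1/(2*c) := min_le_left _ _
      rw [hβ]
      calc 2*c*εF ≤ 2*c*(1/(2*c)) := by
            exact mul_le_mul_of_nonneg_left h1 (by positivity)
        _ = 1 := by field_simp
    have hβ2 : ‖J'‖ * (β * ‖s‖) ≤ η / 4 := by
      have h2 : εF ≤ η / (8*c*(‖J'‖+1)*‖s‖) := min_le_right _ _
      have hJ'nn : (0:ℝ) ≤ ‖J'‖ := norm_nonneg _
      have key : β * ‖s‖ ≤ η / (4*(‖J'‖+1)) := by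
        rw [hβ]
        calc 2*c*εF*‖s‖ ≤ 2*c*(η / (8*c*(‖J'‖+1)*‖s‖))*‖s‖ := by
              apply mul_le_mul_of_nonneg_right ?_ hsnorm.le
              exact mul_le_mul_of_nonneg_left h2 (by positivity)
          _ = η / (4*(‖J'‖+1)) := by field_simp; ring
      calc ‖J'‖ * (β * ‖s‖) ≤ ‖J'‖ * (η / (4*(‖J'‖+1))) :=
            mul_le_mul_of_nonneg_left key hJ'nn
        _ ≤ (‖J'‖+1) * (η / (4*(‖J'‖+1))) := by
            apply mul_le_mul_of_nonneg_right (by linarith) (by positivity)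
        _ = η / 4 := by field_simp
    obtain ⟨t, htpos, hta, htb, htc, htd, hte⟩ :
        ∃ t : ℝ, 0 < t ∧ t * ‖s‖ ≤ rF/2 ∧ t * θ ≤ 1/2 ∧ t * ‖s‖ ≤ 1/2 ∧
          2*(t*‖s‖) < rU ∧ 2*(t*‖s‖) < rJ := by
      set tt := min (rF/(2*‖s‖)) (min (1/(2*θ)) (min (1/(2*‖s‖))
        (min (rU/(8*‖s‖)) (rJ/(8*‖s‖))))) with htt
      have h1 : tt ≤ rF/(2*‖s‖) := min_le_left _ _
      have h2 : tt ≤ 1/(2*θ) := le_trans (min_le_right _ _) (min_le_left _ _)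
      have h3 : tt ≤ 1/(2*‖s‖) := le_trans (min_le_right _ _)
        (le_trans (min_le_right _ _) (min_le_left _ _))
      have h4 : tt ≤ rU/(8*‖s‖) := le_trans (min_le_right _ _)
        (le_trans (min_le_right _ _) (le_trans (min_le_right _ _) (min_le_left _ _)))
      have h5 : tt ≤ rJ/(8*‖s‖) := le_trans (min_le_right _ _)
        (le_trans (min_le_right _ _) (le_trans (min_le_right _ _) (min_le_right _ _)))
      have httpos : 0 < tt := lt_min (by positivity) (lt_min (by positivity)
        (lt_min (by positivity) (lt_min (by positivity) (by positivity))))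
      refine ⟨tt, httpos, ?_, ?_, ?_, ?_, ?_⟩
      · calc tt * ‖s‖ ≤ (rF/(2*‖s‖)) * ‖s‖ := mul_le_mul_of_nonneg_right h1 hsnorm.le
          _ = rF/2 := by field_simp
      · calc tt * θ ≤ (1/(2*θ)) * θ := mul_le_mul_of_nonneg_right h2 hθ0
          _ = 1/2 := by field_simp
      · calc tt * ‖s‖ ≤ (1/(2*‖s‖)) * ‖s‖ := mul_le_mul_of_nonneg_right h3 hsnorm.le
          _ = 1/2 := by field_simp
      · have hle : tt * ‖s‖ ≤ rU/8 := by
          calc tt * ‖s‖ ≤ (rU/(8*‖s‖)) * ‖s‖ := mul_le_mul_of_nonneg_right h4 hsnorm.le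
            _ = rU/8 := by field_simp
        linarith
      · have hle : tt * ‖s‖ ≤ rJ/8 := by
          calc tt * ‖s‖ ≤ (rJ/(8*‖s‖)) * ‖s‖ := mul_le_mul_of_nonneg_right h5 hsnorm.le
            _ = rJ/8 := by field_simp
        linarith
    -- the initial point
    set x₀ : X := xhat + t • s with hx₀
    have hx₀norm : ‖x₀ - xhat‖ = t * ‖s‖ := by
      rw [hx₀, add_sub_cancel_left, norm_smul, Real.norm_eq_abs, abs_of_nonneg htpos.le]
    -- bound on F x₀ via the mean value inequality
    have hFx₀ : ‖F x₀‖ ≤ εF * (t * ‖s‖) := by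
      have hG : ∀ w ∈ closedBall xhat rF,
          HasFDerivWithinAt (fun v => F v - A v) (F' w - A) (closedBall xhat rF) w :=
        fun w _ => ((hF w).sub A.hasFDerivAt).hasFDerivWithinAt
      have hx₀mem : x₀ ∈ closedBall xhat rF := by
        rw [mem_closedBall, dist_eq_norm, hx₀norm]
        linarith
      have hxhatmem : xhat ∈ closedBall xhat rF := mem_closedBall_self hrF.le
      have hmvt := (convex_closedBall xhat rF).norm_image_sub_le_of_norm_hasFDerivWithin_le
        hG hFball hxhatmem hx₀mem
      have heq : (fun v => F v - A v) x₀ - (fun v => F v - A v) xhat = F x₀ := by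
        simp only []
        rw [hFx, hx₀, map_add, map_smul, hAs, smul_zero]
        abel
      rw [heq, hx₀norm] at hmvt
      exact hmvt
    -- apply the Newton iteration
    have hx₀rep : x₀ = xhat + (t*θ) • (x - xhat) := by
      rw [hx₀, hs, smul_smul]
    have h2cF : 2 * c * ‖F x₀‖ ≤ β * (t * ‖s‖) := by
      rw [hβ]
      calc 2 * c * ‖F x₀‖ ≤ 2 * c * (εF * (t * ‖s‖)) :=
            mul_le_mul_of_nonneg_left hFx₀ (by positivity)
        _ = 2*c*εF * (t * ‖s‖) := by ring
    have hβt : β * (t * ‖s‖) ≤ t * ‖s‖ := by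
      have := mul_le_mul_of_nonneg_right hβ1 (by positivity : (0:ℝ) ≤ t * ‖s‖)
      linarith
    obtain ⟨xi, hxiM, hFxi, hxidist⟩ := zk_newton M hMcl hMconv xhat hxM F F' hF A c hc hQ
      rF hrF (fun z hz => (hFball z hz).trans (min_le_left _ _))
      x₀ (t*θ) x (by positivity) hxMem hx₀rep (by rw [hx₀norm]; exact hta)
      (by
        apply le_min
        · linarith
        · linarith)
    have hxidist' : ‖xi - x₀‖ ≤ β * (t * ‖s‖) := hxidist.trans h2cF
    -- distance of xi from xhat
    have hxixhat : ‖xi - xhat‖ ≤ 2 * (t * ‖s‖) := by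
      calc ‖xi - xhat‖ ≤ ‖xi - x₀‖ + ‖x₀ - xhat‖ := by
            rw [show xi - xhat = (xi - x₀) + (x₀ - xhat) by abel]
            exact norm_add_le _ _
        _ ≤ β * (t * ‖s‖) + t * ‖s‖ := by rw [hx₀norm]; exact add_le_add_left hxidist' _
        _ ≤ t * ‖s‖ + t * ‖s‖ := by linarith
        _ = 2 * (t * ‖s‖) := by ring
    -- xi is admissible for local minimality
    have hxiU : xi ∈ U := by
      apply hUball
      rw [mem_ball, dist_eq_norm]
      linarith
    have hmin' : J xhat ≤ J xi := hUmin xi ⟨hxiU, hxiM⟩ hFxi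
    -- the little-o estimate at xi
    have hJest : ‖J xi - J xhat - J' (xi - xhat)‖ ≤ εJ * ‖xi - xhat‖ := by
      apply hJball
      rw [dist_eq_norm]
      linarith
    have hJ'split : J' (xi - xhat) = t * J' s + J' (xi - x₀) := by
      have hxieq : xi - xhat = t • s + (xi - x₀) := by rw [hx₀]; abel
      rw [hxieq, map_add, map_smul, smul_eq_mul]
    have hJ'bound : J' (xi - x₀) ≤ ‖J'‖ * (β * (t * ‖s‖)) := by
      calc J' (xi - x₀) ≤ ‖J' (xi - x₀)‖ := le_abs_self _
        _ ≤ ‖J'‖ * ‖xi - x₀‖ := J'.le_opNorm _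
        _ ≤ ‖J'‖ * (β * (t * ‖s‖)) := mul_le_mul_of_nonneg_left hxidist' (norm_nonneg _)
    have habs' : J xi - J xhat ≤ J' (xi - xhat) + εJ * ‖xi - xhat‖ := by
      have h := (abs_le.1 (by rwa [Real.norm_eq_abs] at hJest)).2
      linarith
    have hnorm2 : εJ * ‖xi - xhat‖ ≤ εJ * (2*(t*‖s‖)) :=
      mul_le_mul_of_nonneg_left hxixhat hεJpos.le
    have hεJval : εJ * (2*(t*‖s‖)) = η * t / 2 := by
      rw [hεJ]; field_simp; ring
    have hts' : t * J' s = -(t*η) := by rw [hη]; ring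
    have e1 : ‖J'‖ * (β * (t * ‖s‖)) = t * (‖J'‖ * (β * ‖s‖)) := by ring
    have e2 : t * (‖J'‖ * (β * ‖s‖)) ≤ t * (η/4) := mul_le_mul_of_nonneg_left hβ2 htpos.le
    have e3 : 0 < t * η := mul_pos htpos hηpos
    linarith
  -- ===== construction of the multiplier via Hahn–Banach =====
  choose θw hθw0 hθwle mw hmwM hswnorm hswA using hQ
  set sw : Y → X := fun y => θw y • (mw y - xhat) with hsw
  have hswK : ∀ y, sw y ∈ KK := fun y => ⟨θw y, mw y, hθw0 y, hmwM y, rfl⟩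
  have hswnorm' : ∀ y, ‖sw y‖ ≤ c * ‖y‖ := fun y => hswnorm y
  have hswA' : ∀ y, A (sw y) = y := fun y => hswA y
  set SS : Y → Set ℝ := fun y => {v | ∃ s ∈ KK, A s = y ∧ J' s = v} with hSS
  have hSSne : ∀ y, (SS y).Nonempty := fun y => ⟨J' (sw y), sw y, hswK y, hswA' y, rfl⟩
  have hSSlb : ∀ y, ∀ v ∈ SS y, -(J' (sw (-y))) ≤ v := by
    rintro y v ⟨s, hsK, hAs, rfl⟩
    have hsum : s + sw (-y) ∈ KK := hKadd _ hsK _ (hswK (-y))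
    have hA0 : A (s + sw (-y)) = 0 := by
      rw [map_add, hAs, hswA' (-y)]; abel
    have h0 := hkeylem _ hsum hA0
    rw [map_add] at h0
    linarith
  have hSSbdd : ∀ y, BddBelow (SS y) := fun y => ⟨-(J' (sw (-y))), fun v hv => hSSlb y v hv⟩
  set p : Y → ℝ := fun y => sInf (SS y) with hp
  have hple : ∀ s ∈ KK, p (A s) ≤ J' s := fun s hs => csInf_le (hSSbdd _) ⟨s, hs, rfl, rfl⟩
  have hpub : ∀ y, p y ≤ J' (sw y) := fun y => csInf_le (hSSbdd _) ⟨sw y, hswK y, hswA' y, rfl⟩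
  have hplbd : ∀ y, -(J' (sw (-y))) ≤ p y := fun y => le_csInf (hSSne y) (hSSlb y)
  -- subadditivity
  have hpadd : ∀ y₁ y₂ : Y, p (y₁ + y₂) ≤ p y₁ + p y₂ := by
    intro y₁ y₂
    have key : ∀ v₁ ∈ SS y₁, ∀ v₂ ∈ SS y₂, p (y₁+y₂) ≤ v₁ + v₂ := by
      rintro v₁ ⟨s₁, hs₁, hA₁, rfl⟩ v₂ ⟨s₂, hs₂, hA₂, rfl⟩
      have hJsum : J' s₁ + J' s₂ = J' (s₁ + s₂) := (map_add _ _ _).symm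
      rw [hJsum]
      exact csInf_le (hSSbdd _) ⟨s₁ + s₂, hKadd _ hs₁ _ hs₂, by rw [map_add, hA₁, hA₂], rfl⟩
    have step1 : ∀ v₁ ∈ SS y₁, p (y₁+y₂) - v₁ ≤ p y₂ := by
      intro v₁ hv₁
      apply le_csInf (hSSne y₂)
      intro v₂ hv₂
      linarith [key v₁ hv₁ v₂ hv₂]
    have step2 : p (y₁+y₂) - p y₂ ≤ p y₁ := by
      apply le_csInf (hSSne y₁)
      intro v₁ hv₁
      linarith [step1 v₁ hv₁]
    linarith
  -- positive homogeneity
  have hphom : ∀ (a : ℝ), 0 < a → ∀ y : Y, p (a • y) = a * p y := by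
    intro a ha y
    have hset : SS (a • y) = (fun v => a * v) '' SS y := by
      ext v
      constructor
      · rintro ⟨s, hsK, hAs, rfl⟩
        obtain ⟨θ, x, hθ, hx, rfl⟩ := hsK
        refine ⟨J' (a⁻¹ • (θ • (x - xhat))),
          ⟨a⁻¹ • (θ • (x - xhat)), ⟨a⁻¹ * θ, x, by positivity, hx, (mul_smul _ _ _).symm⟩, ?_, rfl⟩, ?_⟩
        · rw [map_smul, hAs, smul_smul, inv_mul_cancel₀ (ne_of_gt ha), one_smul]
        · show a * J' (a⁻¹ • (θ • (x - xhat))) = J' (θ • (x - xhat))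
          rw [map_smul, smul_eq_mul, ← mul_assoc, mul_inv_cancel₀ (ne_of_gt ha), one_mul]
      · rintro ⟨v, ⟨s, hsK, hAs, rfl⟩, rfl⟩
        obtain ⟨θ, x, hθ, hx, rfl⟩ := hsK
        exact ⟨a • θ • (x - xhat), ⟨a*θ, x, by positivity, hx, (mul_smul _ _ _).symm⟩,
          by rw [map_smul, hAs], by rw [map_smul, smul_eq_mul]⟩
    have himg : (fun v => a * v) '' SS y = a • SS y := by
      rw [← Set.image_smul]
      simp [smul_eq_mul]
    show sInf (SS (a • y)) = a * sInf (SS y)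
    rw [hset, himg, Real.sInf_smul_of_nonneg ha.le, smul_eq_mul]
  -- Hahn–Banach
  have hp0 : (0:ℝ) ≤ p 0 := le_csInf (hSSne 0) (by
    rintro v ⟨s, hsK, hAs, rfl⟩
    exact hkeylem _ hsK hAs)
  obtain ⟨g, hgdom, hgle⟩ := exists_extension_of_le_sublinear (⟨⊥, 0⟩ : Y →ₗ.[ℝ] ℝ) p
    hphom hpadd (by
      rintro ⟨x, hx⟩
      have hx0 : x = 0 := (Submodule.mem_bot ℝ).1 hx
      simp [hx0]
      exact hp0)
  -- continuity bound
  have hgb : ∀ y : Y, g y ≤ (‖J'‖ * c) * ‖y‖ := by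
    intro y
    calc g y ≤ p y := hgle y
      _ ≤ J' (sw y) := hpub y
      _ ≤ ‖J' (sw y)‖ := le_abs_self _
      _ ≤ ‖J'‖ * ‖sw y‖ := J'.le_opNorm _
      _ ≤ ‖J'‖ * (c * ‖y‖) :=
          mul_le_mul_of_nonneg_left (hswnorm' y) (norm_nonneg _)
      _ = (‖J'‖ * c) * ‖y‖ := by ring
  have hbound : ∀ y : Y, ‖g y‖ ≤ (‖J'‖ * c) * ‖y‖ := by
    intro y
    rw [Real.norm_eq_abs, abs_le]
    constructor
    · have h1 := hgb (-y)
      rw [map_neg, norm_neg] at h1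
      linarith
    · exact hgb y
  set lam : Y →L[ℝ] ℝ := LinearMap.mkContinuous g (‖J'‖ * c) hbound with hlam
  refine ⟨lam, ?_⟩
  intro θ hθ x hx
  have hsK : θ • (x - xhat) ∈ KK := ⟨θ, x, hθ, hx, rfl⟩
  have h1 : g (A (θ • (x - xhat))) ≤ p (A (θ • (x - xhat))) := hgle _
  have h2 := hple _ hsK
  have hlamapp : lam (A (θ • (x - xhat))) = g (A (θ • (x - xhat))) := rfl
  have hgoal : lam (A (θ • (x - xhat))) ≤ J' (θ • (x - xhat)) := by
    rw [hlamapp]; linarith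
  linarith
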